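/- For λ ∈ ℚ_p^× and integers m, n > 0, the set λ·Q_{m,n} is the disjoint union over a ∈ ℤ of the balls λ·p^{na}·(1 + p^mℤ_p); these balls are pairwise disjoint and each is a maximal ball contained in λ·Q_{m,n} (no strictly larger ball is contained in λ·Q_{m,n}). -/

import Mathlib

/-- `ac_m(w) = ac_m(t)`: the angular components mod `p^m` agree. -/
def acEq (p : ℕ) [Fact p.Prime] (k : ℕ) (w t : ℚ_[p]) : Prop :=
  ‖w * (p : ℚ_[p]) ^ (-w.valuation) - t * (p : ℚ_[p]) ^ (-t.valuation)‖ ≤ (p : ℝ) ^ (-(k : ℤ))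

/-- A ball in `ℚ_p` is a set of the form `a + b·ℤ_p` with `b ≠ 0`. -/
def IsBall (p : ℕ) [Fact p.Prime] (B : Set ℚ_[p]) : Prop :=
  ∃ a b : ℚ_[p], b ≠ 0 ∧ B = {x | ‖x - a‖ ≤ ‖b‖}

/-- The set `Q_{m,n} = {x ∈ ℚ_p^× : n ∣ v(x), ac_m(x) = 1}`. -/
def Qset (p : ℕ) [Fact p.Prime] (m n : ℕ) : Set ℚ_[p] :=
  {x | x ≠ 0 ∧ (n : ℤ) ∣ x.valuation ∧ acEq p m x 1}

/-- The ball `λ·p^{na}·(1 + p^mℤ_p)`. -/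
def cosetBall (p : ℕ) [Fact p.Prime] (m n : ℕ) (l : ℚ_[p]) (a : ℤ) : Set ℚ_[p] :=
  Set.range fun u : ℤ_[p] => l * (p : ℚ_[p]) ^ ((n : ℤ) * a) * (1 + (p : ℚ_[p]) ^ m * (u : ℚ_[p]))


variable {p : ℕ} [Fact p.Prime]

lemma hp1R : (1:ℝ) < p := Nat.one_lt_cast.mpr (Fact.out (p := p.Prime)).one_lt
lemma hpne : ((p:ℚ_[p])) ≠ 0 := Nat.cast_ne_zero.mpr (Fact.out (p := p.Prime)).ne_zero

lemma val_p_zpow (k : ℤ) : ((p:ℚ_[p]) ^ k).valuation = k := by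
  have hne : ((p:ℚ_[p]) ^ k) ≠ 0 := zpow_ne_zero _ hpne
  have := Padic.norm_eq_zpow_neg_valuation hne
  rw [Padic.norm_p_zpow] at this
  have := zpow_right_injective₀ (by linarith [hp1R (p:=p)]) (ne_of_gt hp1R) this.symm
  omega

lemma norm_one_add {m : ℕ} (hm : 0 < m) {u : ℚ_[p]} (hu : ‖u‖ ≤ 1) :
    ‖1 + (p:ℚ_[p])^m * u‖ = 1 := by
  have h2 : ‖(p:ℚ_[p])^m * u‖ < 1 := by
    rw [norm_mul, Padic.norm_p_pow]
    calc (p:ℝ)^(-(m:ℤ)) * ‖u‖ ≤ (p:ℝ)^(-(m:ℤ)) * 1 := by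
          apply mul_le_mul_of_nonneg_left hu (by positivity)
      _ < 1 := by
          rw [mul_one]
          exact zpow_lt_one_of_neg₀ hp1R (by omega)
  calc ‖1 + (p:ℚ_[p])^m * u‖ = max ‖(1:ℚ_[p])‖ ‖(p:ℚ_[p])^m * u‖ := by
        apply Padic.add_eq_max_of_ne
        rw [norm_one]; exact fun h => absurd h.symm (ne_of_lt h2)
    _ = 1 := by rw [norm_one, max_eq_left h2.le]

lemma mem_cosetBall {m n : ℕ} {l : ℚ_[p]} {a : ℤ} {x : ℚ_[p]} :
    x ∈ cosetBall p m n l a ↔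
      ∃ u : ℚ_[p], ‖u‖ ≤ 1 ∧ x = l * (p:ℚ_[p]) ^ ((n:ℤ) * a) * (1 + (p:ℚ_[p])^m * u) := by
  constructor
  · rintro ⟨u, rfl⟩; exact ⟨u, u.2, rfl⟩
  · rintro ⟨u, hu, rfl⟩; exact ⟨⟨u, hu⟩, rfl⟩

lemma mem_Qset {m n : ℕ} (hm : 0 < m) {x : ℚ_[p]} :
    x ∈ Qset p m n ↔
      ∃ a : ℤ, ∃ u : ℚ_[p], ‖u‖ ≤ 1 ∧ x = (p:ℚ_[p]) ^ ((n:ℤ) * a) * (1 + (p:ℚ_[p])^m * u) := by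
  constructor
  · rintro ⟨hx0, ⟨a, ha⟩, hac⟩
    refine ⟨a, (x * (p:ℚ_[p]) ^ (-x.valuation) - 1) * (p:ℚ_[p]) ^ (-(m:ℤ)), ?_, ?_⟩
    · unfold acEq at hac
      simp only [Padic.valuation_one, neg_zero, zpow_zero, mul_one, one_mul] at hac
      rw [norm_mul, Padic.norm_p_zpow, neg_neg]
      calc ‖x * (p:ℚ_[p]) ^ (-x.valuation) - 1‖ * (p:ℝ)^(m:ℤ)
          ≤ (p:ℝ)^(-(m:ℤ)) * (p:ℝ)^(m:ℤ) := by
            apply mul_le_mul_of_nonneg_right hac (by positivity)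
        _ = 1 := by rw [← zpow_add₀ (by linarith [hp1R (p:=p)] : (0:ℝ) < p).ne', neg_add_cancel, zpow_zero]
    · have h1 : (p:ℚ_[p])^(m:ℕ) * ((p:ℚ_[p]) ^ (-(m:ℤ))) = 1 := by
        rw [← zpow_natCast (p:ℚ_[p]) m, ← zpow_add₀ hpne, add_neg_cancel, zpow_zero]
      have h2 : (p:ℚ_[p])^((n:ℤ)*a) * ((p:ℚ_[p]) ^ (-x.valuation)) = 1 := by
        rw [← ha, ← zpow_add₀ hpne, add_neg_cancel, zpow_zero]
      have hthis : (p:ℚ_[p])^m * ((x * (p:ℚ_[p]) ^ (-x.valuation) - 1) * (p:ℚ_[p]) ^ (-(m:ℤ)))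
          = x * (p:ℚ_[p]) ^ (-x.valuation) - 1 := by
        rw [mul_comm ((p:ℚ_[p])^m) _, mul_assoc]
        rw [mul_comm ((p:ℚ_[p]) ^ (-(m:ℤ))) _, h1, mul_one]
      have h3 : (p:ℚ_[p])^(x.valuation) * (p:ℚ_[p])^(-x.valuation) = 1 := by
        rw [← zpow_add₀ hpne, add_neg_cancel, zpow_zero]
      rw [hthis, ← ha]
      calc x = x * ((p:ℚ_[p])^(x.valuation) * (p:ℚ_[p])^(-x.valuation)) := by rw [h3, mul_one]
        _ = (p:ℚ_[p])^(x.valuation) * (1 + (x * (p:ℚ_[p])^(-x.valuation) - 1)) := by ring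
  · rintro ⟨a, u, hu, rfl⟩
    have hnorm1 : ‖1 + (p:ℚ_[p])^m * u‖ = 1 := norm_one_add hm hu
    have hw0 : (1 + (p:ℚ_[p])^m * u) ≠ 0 := by
      intro h; rw [h, norm_zero] at hnorm1; exact one_ne_zero hnorm1.symm
    have hx0 : (p:ℚ_[p]) ^ ((n:ℤ) * a) * (1 + (p:ℚ_[p])^m * u) ≠ 0 :=
      mul_ne_zero (zpow_ne_zero _ hpne) hw0
    have hval : ((p:ℚ_[p]) ^ ((n:ℤ) * a) * (1 + (p:ℚ_[p])^m * u)).valuation = (n:ℤ) * a := by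
      have hv1 : (1 + (p:ℚ_[p])^m * u).valuation = 0 := by
        have := Padic.norm_eq_zpow_neg_valuation hw0
        rw [hnorm1] at this
        have := zpow_right_injective₀ (by linarith [hp1R (p:=p)]) (ne_of_gt hp1R)
          (by rw [← this, zpow_zero] : (p:ℝ)^(-(1 + (p:ℚ_[p])^m * u).valuation) = (p:ℝ)^(0:ℤ))
        omega
      rw [Padic.valuation_mul (zpow_ne_zero _ hpne) hw0, val_p_zpow, hv1, add_zero]
    refine ⟨hx0, ⟨a, hval⟩, ?_⟩
    unfold acEq
    simp only [Padic.valuation_one, neg_zero, zpow_zero, mul_one, one_mul, hval]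
    have : (p:ℚ_[p]) ^ ((n:ℤ) * a) * (1 + (p:ℚ_[p])^m * u) * (p:ℚ_[p]) ^ (-((n:ℤ)*a))
        = (1 + (p:ℚ_[p])^m * u) := by
      rw [mul_comm ((p:ℚ_[p]) ^ ((n:ℤ) * a)) _, mul_assoc, ← zpow_add₀ hpne, add_neg_cancel,
        zpow_zero, mul_one]
    rw [this, add_sub_cancel_left, norm_mul, Padic.norm_p_pow]
    calc (p:ℝ)^(-(m:ℤ)) * ‖u‖ ≤ (p:ℝ)^(-(m:ℤ)) * 1 :=
          mul_le_mul_of_nonneg_left hu (by positivity)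
      _ = (p:ℝ)^(-(m:ℤ)) := mul_one _

lemma norm_p_zpow_real (k : ℤ) : ‖(p:ℚ_[p]) ^ k‖ = (p:ℝ) ^ (-k) := Padic.norm_p_zpow k

lemma cosetBall_eq_ball {m n : ℕ} {l : ℚ_[p]} (hl : l ≠ 0) (a : ℤ) :
    cosetBall p m n l a =
      {x | ‖x - l * (p:ℚ_[p]) ^ ((n:ℤ) * a)‖ ≤ ‖l * (p:ℚ_[p]) ^ ((n:ℤ) * a + m)‖} := by
  have hd : l * (p:ℚ_[p]) ^ ((n:ℤ) * a + m) ≠ 0 := mul_ne_zero hl (zpow_ne_zero _ hpne)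
  have hsplit : (p:ℚ_[p]) ^ ((n:ℤ) * a + m) = (p:ℚ_[p]) ^ ((n:ℤ) * a) * (p:ℚ_[p]) ^ (m:ℕ) := by
    rw [← zpow_natCast (p:ℚ_[p]) m, ← zpow_add₀ hpne]
  ext x
  simp only [Set.mem_setOf_eq, mem_cosetBall]
  constructor
  · rintro ⟨u, hu, rfl⟩
    have : l * (p:ℚ_[p]) ^ ((n:ℤ) * a) * (1 + (p:ℚ_[p])^m * u) - l * (p:ℚ_[p]) ^ ((n:ℤ) * a)
        = l * ((p:ℚ_[p]) ^ ((n:ℤ) * a) * (p:ℚ_[p])^(m:ℕ)) * u := by ring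
    rw [this, ← hsplit, norm_mul]
    calc ‖l * (p:ℚ_[p]) ^ ((n:ℤ) * a + m)‖ * ‖u‖ ≤ ‖l * (p:ℚ_[p]) ^ ((n:ℤ) * a + m)‖ * 1 :=
          mul_le_mul_of_nonneg_left hu (norm_nonneg _)
      _ = _ := mul_one _
  · intro hx
    refine ⟨(x - l * (p:ℚ_[p]) ^ ((n:ℤ) * a)) / (l * (p:ℚ_[p]) ^ ((n:ℤ) * a + m)), ?_, ?_⟩
    · rw [norm_div, div_le_one (norm_pos_iff.mpr hd)]
      exact hx
    · have key : l * (p:ℚ_[p]) ^ ((n:ℤ) * a + m) *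
          ((x - l * (p:ℚ_[p]) ^ ((n:ℤ) * a)) / (l * (p:ℚ_[p]) ^ ((n:ℤ) * a + m)))
          = x - l * (p:ℚ_[p]) ^ ((n:ℤ) * a) := mul_div_cancel₀ _ hd
      calc x = l * (p:ℚ_[p]) ^ ((n:ℤ) * a) + (x - l * (p:ℚ_[p]) ^ ((n:ℤ) * a)) := by ring
        _ = l * (p:ℚ_[p]) ^ ((n:ℤ) * a) + l * (p:ℚ_[p]) ^ ((n:ℤ) * a + m) *
            ((x - l * (p:ℚ_[p]) ^ ((n:ℤ) * a)) / (l * (p:ℚ_[p]) ^ ((n:ℤ) * a + m))) := by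
              rw [key]
        _ = _ := by rw [hsplit]; ring

lemma norm_of_mem_cosetBall {m n : ℕ} (hm : 0 < m) {l : ℚ_[p]} {a : ℤ} {x : ℚ_[p]}
    (hx : x ∈ cosetBall p m n l a) : ‖x‖ = ‖l‖ * (p:ℝ) ^ (-((n:ℤ) * a)) := by
  obtain ⟨u, hu, rfl⟩ := mem_cosetBall.mp hx
  rw [norm_mul, norm_mul, norm_one_add hm hu, mul_one, norm_p_zpow_real]

lemma notin_Qset {m n : ℕ} {k : ℕ} (hk : 0 < k) (hkm : k < m) (a : ℤ) :
    (p:ℚ_[p]) ^ ((n:ℤ) * a) * (1 - (p:ℚ_[p])^k) ∉ Qset p m n := by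
  rintro ⟨h0, -, hac⟩
  have hz : (1 : ℚ_[p]) - (p:ℚ_[p])^k = 1 + (p:ℚ_[p])^k * (-1) := by ring
  have hznorm : ‖(1 : ℚ_[p]) - (p:ℚ_[p])^k‖ = 1 := by
    rw [hz]; exact norm_one_add hk (by simp)
  have hz0 : (1 : ℚ_[p]) - (p:ℚ_[p])^k ≠ 0 := by
    intro h; rw [h, norm_zero] at hznorm; exact one_ne_zero hznorm.symm
  have hzval : ((1 : ℚ_[p]) - (p:ℚ_[p])^k).valuation = 0 := by
    have h1 := Padic.norm_eq_zpow_neg_valuation hz0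
    rw [hznorm] at h1
    have := zpow_right_injective₀ (by linarith [hp1R (p:=p)]) (ne_of_gt hp1R)
      (by rw [← h1, zpow_zero] : (p:ℝ)^(-((1 : ℚ_[p]) - (p:ℚ_[p])^k).valuation) = (p:ℝ)^(0:ℤ))
    omega
  have hval : ((p:ℚ_[p]) ^ ((n:ℤ) * a) * (1 - (p:ℚ_[p])^k)).valuation = (n:ℤ) * a := by
    rw [Padic.valuation_mul (zpow_ne_zero _ hpne) hz0, val_p_zpow, hzval, add_zero]
  unfold acEq at hac
  simp only [Padic.valuation_one, neg_zero, zpow_zero, mul_one, one_mul, hval] at hac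
  have hsimp : (p:ℚ_[p]) ^ ((n:ℤ) * a) * (1 - (p:ℚ_[p])^k) * (p:ℚ_[p]) ^ (-((n:ℤ) * a)) - 1
      = -((p:ℚ_[p])^k) := by
    rw [mul_comm ((p:ℚ_[p]) ^ ((n:ℤ) * a)) _, mul_assoc, ← zpow_add₀ hpne, add_neg_cancel,
      zpow_zero, mul_one]
    ring
  rw [hsimp, norm_neg, Padic.norm_p_pow] at hac
  have : (p:ℝ) ^ (-(m:ℤ)) < (p:ℝ) ^ (-(k:ℤ)) := by
    rw [zpow_lt_zpow_iff_right₀ hp1R]; omega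
  linarith

/-- For `λ ∈ ℚ_p^×` and `m, n > 0`, `λ·Q_{m,n}` is the disjoint union over
`a ∈ ℤ` of the balls `λ·p^{na}·(1 + p^mℤ_p)`, and each such ball is a maximal ball
contained in `λ·Q_{m,n}`. -/
theorem stmt7 (p : ℕ) [Fact p.Prime] (m n : ℕ) (hm : 0 < m) (hn : 0 < n)
    (l : ℚ_[p]) (hl : l ≠ 0) :
    ((fun x => l * x) '' Qset p m n = ⋃ a : ℤ, cosetBall p m n l a) ∧
    (∀ a b : ℤ, a ≠ b → Disjoint (cosetBall p m n l a) (cosetBall p m n l b)) ∧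
    (∀ a : ℤ, cosetBall p m n l a ⊆ (fun x => l * x) '' Qset p m n ∧
      ∀ B' : Set ℚ_[p], IsBall p B' → cosetBall p m n l a ⊂ B' →
        ¬ B' ⊆ (fun x => l * x) '' Qset p m n) := by
  refine ⟨?_, ?_, ?_⟩
  · ext x
    simp only [Set.mem_iUnion, Set.mem_image]
    constructor
    · rintro ⟨y, hy, rfl⟩
      obtain ⟨a, u, hu, rfl⟩ := (mem_Qset hm).mp hy
      exact ⟨a, mem_cosetBall.mpr ⟨u, hu, by ring⟩⟩
    · rintro ⟨a, hx⟩
      obtain ⟨u, hu, rfl⟩ := mem_cosetBall.mp hx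
      exact ⟨(p:ℚ_[p]) ^ ((n:ℤ)*a) * (1 + (p:ℚ_[p])^m*u), (mem_Qset hm).mpr ⟨a,u,hu,rfl⟩,
        by ring⟩
  · intro a b hab
    rw [Set.disjoint_left]
    intro x hxa hxb
    have h1 := norm_of_mem_cosetBall hm hxa
    have h2 := norm_of_mem_cosetBall hm hxb
    have hlpos : 0 < ‖l‖ := norm_pos_iff.mpr hl
    have h3 : (p:ℝ)^(-((n:ℤ)*a)) = (p:ℝ)^(-((n:ℤ)*b)) :=
      mul_left_cancel₀ hlpos.ne' (h1.symm.trans h2)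
    have h4 := zpow_right_injective₀ (by linarith [hp1R (p:=p)]) (ne_of_gt hp1R) h3
    have h5 : (n:ℤ)*a = (n:ℤ)*b := by omega
    exact hab (mul_left_cancel₀ (by exact_mod_cast hn.ne' : (n:ℤ) ≠ 0) h5)
  · intro a
    constructor
    · intro x hx
      obtain ⟨u, hu, rfl⟩ := mem_cosetBall.mp hx
      exact ⟨_, (mem_Qset hm).mpr ⟨a, u, hu, rfl⟩, by ring⟩
    · rintro B' ⟨c, b, hb0, rfl⟩ hss hB
      have hcen : l * (p:ℚ_[p])^((n:ℤ)*a) ∈ cosetBall p m n l a :=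
        mem_cosetBall.mpr ⟨0, by simp, by ring⟩
      have hcenB : ‖l * (p:ℚ_[p])^((n:ℤ)*a) - c‖ ≤ ‖b‖ := hss.1 hcen
      obtain ⟨y, hyB, hynot⟩ := Set.exists_of_ssubset hss
      have hyB' : ‖y - c‖ ≤ ‖b‖ := hyB
      have hyball : ‖y - l * (p:ℚ_[p])^((n:ℤ)*a)‖ ≤ ‖b‖ := by
        have h3 := Padic.nonarchimedean (y - c) (c - l * (p:ℚ_[p])^((n:ℤ)*a))
        have heq : y - c + (c - l * (p:ℚ_[p])^((n:ℤ)*a)) = y - l * (p:ℚ_[p])^((n:ℤ)*a) := by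
          ring
        rw [heq] at h3
        refine h3.trans (max_le hyB' ?_)
        rw [norm_sub_rev]; exact hcenB
      have hygt : ‖l * (p:ℚ_[p])^((n:ℤ)*a + m)‖ < ‖y - l * (p:ℚ_[p])^((n:ℤ)*a)‖ := by
        by_contra h
        push_neg at h
        exact hynot (by rw [cosetBall_eq_ball hl a]; exact h)
      have hbgt : ‖l * (p:ℚ_[p])^((n:ℤ)*a + m)‖ < ‖b‖ := lt_of_lt_of_le hygt hyball
      have hbnorm : ‖b‖ = (p:ℝ)^(-b.valuation) := Padic.norm_eq_zpow_neg_valuation hb0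
      have hlm : ‖l * (p:ℚ_[p])^((n:ℤ)*a + m)‖ = (p:ℝ)^(-(l.valuation + ((n:ℤ)*a + m))) := by
        rw [norm_mul, Padic.norm_eq_zpow_neg_valuation hl, norm_p_zpow_real,
          ← zpow_add₀ (by linarith [hp1R (p:=p)] : (0:ℝ) < p).ne', ← neg_add]
      have hexp : -(l.valuation + ((n:ℤ)*a + m)) < -b.valuation := by
        rw [hbnorm, hlm, zpow_lt_zpow_iff_right₀ hp1R] at hbgt
        exact hbgt
      have hble : (p:ℝ)^(-(l.valuation + ((n:ℤ)*a + (m:ℤ) - 1))) ≤ ‖b‖ := by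
        rw [hbnorm, zpow_le_zpow_iff_right₀ hp1R]
        omega
      set w := l * (p:ℚ_[p])^((n:ℤ)*a) * (1 - (p:ℚ_[p])^(m-1)) with hw
      have hwdiff : w - l * (p:ℚ_[p])^((n:ℤ)*a)
          = -(l * ((p:ℚ_[p])^((n:ℤ)*a) * (p:ℚ_[p])^(m-1))) := by rw [hw]; ring
      have hwnorm : ‖w - l*(p:ℚ_[p])^((n:ℤ)*a)‖
          = (p:ℝ)^(-(l.valuation + ((n:ℤ)*a + (m:ℤ) - 1))) := by
        rw [hwdiff, norm_neg, norm_mul, norm_mul, Padic.norm_eq_zpow_neg_valuation hl, norm_p_zpow_real,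
          Padic.norm_p_pow,
          ← zpow_add₀ (by linarith [hp1R (p:=p)] : (0:ℝ) < p).ne',
          ← zpow_add₀ (by linarith [hp1R (p:=p)] : (0:ℝ) < p).ne']
        congr 1
        have : ((m - 1 : ℕ) : ℤ) = (m:ℤ) - 1 := by omega
        rw [this]; ring
      have hwB : ‖w - c‖ ≤ ‖b‖ := by
        have h3 := Padic.nonarchimedean (w - l * (p:ℚ_[p])^((n:ℤ)*a))
          (l * (p:ℚ_[p])^((n:ℤ)*a) - c)
        have heq : w - l * (p:ℚ_[p])^((n:ℤ)*a) + (l * (p:ℚ_[p])^((n:ℤ)*a) - c) = w - c := by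
          ring
        rw [heq] at h3
        exact h3.trans (max_le (hwnorm ▸ hble) hcenB)
      obtain ⟨y₀, hy₀Q, hy₀⟩ := hB hwB
      have hy₀eq : y₀ = (p:ℚ_[p])^((n:ℤ)*a) * (1 - (p:ℚ_[p])^(m-1)) :=
        mul_left_cancel₀ hl (by rw [show l*y₀ = w from hy₀, hw]; ring)
      rcases Nat.lt_or_ge 1 m with hm2 | hm1
      · exact notin_Qset (k := m-1) (by omega) (by omega) a (hy₀eq ▸ hy₀Q)
      · have hm1' : m = 1 := by omega
        subst hm1'
        have hy0 : y₀ = 0 := by rw [hy₀eq]; norm_num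
        exact hy₀Q.1 hy0
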